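/- Let N ≥ 3 be an integer and L > 0. The following are equivalent: (i) there exist λ ∈ ℂ and functions φ₁, …, φ_N : ℝ → ℂ, not all identically zero on [0,L], each satisfying the KdV spectral ODE with parameter λ on [0,L], with the boundary conditions φ_j(0) = φ₁(0) for all j, Σ_{j=1}^N φ_j''(0) = 0, φ_j(L) = 0 and φ_j'(0) = 0 for all j, φ₁'(L) = 0, and φ_j''(L) = 0 for j = 2,…,N; (ii) L belongs to the critical set 𝒩*. -/

import Mathlib

/-- A function `φ : ℝ → ℂ` satisfies the KdV spectral ODE with parameter `lam` on `[0, L]`: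
it is three times continuously differentiable and `lam·φ + φ' + φ''' = 0` on `[0, L]`. -/
def KdVSpectralODE (lam : ℂ) (L : ℝ) (φ : ℝ → ℂ) : Prop :=
  ContDiff ℝ 3 φ ∧
    ∀ x ∈ Set.Icc (0 : ℝ) L, lam * φ x + deriv φ x + iteratedDeriv 3 φ x = 0

/-- The critical set 𝒩* of Glass and Guerrero. -/
def criticalNStar : Set ℝ :=
  {L : ℝ | 0 < L ∧ ∃ a b : ℂ,
    a * Complex.exp a = b * Complex.exp b ∧
    b * Complex.exp b = -(a + b) * Complex.exp (-(a + b)) ∧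
    (L : ℂ) ^ 2 = -(a ^ 2 + a * b + b ^ 2)}


open Set Complex Polynomial

noncomputable section KdVAux


/-- building block `(a + b x) e^{ν x}` -/
def eb (a b ν : ℂ) : ℝ → ℂ := fun x => (a + b * x) * Complex.exp (ν * x)

lemma eb_hasDerivAt (a b ν : ℂ) (x : ℝ) :
    HasDerivAt (eb a b ν) (eb (a * ν + b) (b * ν) ν x) x := by
  have h1 : HasDerivAt (fun x : ℝ => (x : ℂ)) 1 x := by
    simpa using (hasDerivAt_id x).ofReal_comp
  have h3 : HasDerivAt (fun x : ℝ => Complex.exp (ν * x)) (Complex.exp (ν * x) * ν) x :=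
    (by simpa using h1.const_mul ν : HasDerivAt (fun x : ℝ => (ν * x : ℂ)) ν x).cexp
  have h4 : HasDerivAt (fun x : ℝ => a + b * (x : ℂ)) b x := by
    simpa using (h1.const_mul b).const_add a
  have h5 := h4.mul h3
  have : b * Complex.exp (ν * x) + (a + b * x) * (Complex.exp (ν * x) * ν)
      = eb (a * ν + b) (b * ν) ν x := by unfold eb; ring
  rw [this] at h5; exact h5

lemma eb_contDiff (a b ν : ℂ) : ContDiff ℝ 3 (eb a b ν) := by
  unfold eb
  have h1 : ContDiff ℝ 3 (fun x : ℝ => (x : ℂ)) := Complex.ofRealCLM.contDiff.of_le le_top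
  exact ((contDiff_const.add (contDiff_const.mul h1)).mul
    ((contDiff_const.mul h1).cexp))

lemma eb_deriv (a b ν : ℂ) : deriv (eb a b ν) = eb (a * ν + b) (b * ν) ν :=
  funext fun x => (eb_hasDerivAt a b ν x).deriv

lemma eb_zero (a b ν : ℂ) : eb a b ν 0 = a := by simp [eb]

lemma eb_diff (a b ν : ℂ) : Differentiable ℝ (eb a b ν) :=
  fun x => (eb_hasDerivAt a b ν x).differentiableAt

def sol3 (a1 b1 n1 a2 b2 n2 a3 b3 n3 : ℂ) : ℝ → ℂ :=
  fun x => eb a1 b1 n1 x + eb a2 b2 n2 x + eb a3 b3 n3 x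

lemma sol3_contDiff (a1 b1 n1 a2 b2 n2 a3 b3 n3 : ℂ) :
    ContDiff ℝ 3 (sol3 a1 b1 n1 a2 b2 n2 a3 b3 n3) :=
  ((eb_contDiff _ _ _).add (eb_contDiff _ _ _)).add (eb_contDiff _ _ _)

lemma sol3_diff (a1 b1 n1 a2 b2 n2 a3 b3 n3 : ℂ) :
    Differentiable ℝ (sol3 a1 b1 n1 a2 b2 n2 a3 b3 n3) :=
  ((eb_diff _ _ _).add (eb_diff _ _ _)).add (eb_diff _ _ _)

lemma sol3_hasDerivAt (a1 b1 n1 a2 b2 n2 a3 b3 n3 : ℂ) (x : ℝ) :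
    HasDerivAt (sol3 a1 b1 n1 a2 b2 n2 a3 b3 n3)
      (sol3 (a1*n1+b1) (b1*n1) n1 (a2*n2+b2) (b2*n2) n2 (a3*n3+b3) (b3*n3) n3 x) x :=
  ((eb_hasDerivAt _ _ _ _).add (eb_hasDerivAt _ _ _ _)).add (eb_hasDerivAt _ _ _ _)

lemma sol3_deriv (a1 b1 n1 a2 b2 n2 a3 b3 n3 : ℂ) :
    deriv (sol3 a1 b1 n1 a2 b2 n2 a3 b3 n3)
      = sol3 (a1*n1+b1) (b1*n1) n1 (a2*n2+b2) (b2*n2) n2 (a3*n3+b3) (b3*n3) n3 :=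
  funext fun x => (sol3_hasDerivAt _ _ _ _ _ _ _ _ _ x).deriv

lemma sol3_zero (a1 b1 n1 a2 b2 n2 a3 b3 n3 : ℂ) :
    sol3 a1 b1 n1 a2 b2 n2 a3 b3 n3 0 = a1 + a2 + a3 := by
  simp [sol3, eb_zero]

lemma sol3_deriv2 (a1 b1 n1 a2 b2 n2 a3 b3 n3 : ℂ) :
    deriv (deriv (sol3 a1 b1 n1 a2 b2 n2 a3 b3 n3))
      = sol3 (a1*n1^2+2*b1*n1) (b1*n1^2) n1 (a2*n2^2+2*b2*n2) (b2*n2^2) n2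
          (a3*n3^2+2*b3*n3) (b3*n3^2) n3 := by
  rw [sol3_deriv, sol3_deriv]
  ring_nf

lemma sol3_deriv3 (a1 b1 n1 a2 b2 n2 a3 b3 n3 : ℂ) :
    deriv (deriv (deriv (sol3 a1 b1 n1 a2 b2 n2 a3 b3 n3)))
      = sol3 (a1*n1^3+3*b1*n1^2) (b1*n1^3) n1 (a2*n2^3+3*b2*n2^2) (b2*n2^3) n2
          (a3*n3^3+3*b3*n3^2) (b3*n3^3) n3 := by
  rw [sol3_deriv, sol3_deriv, sol3_deriv]
  ring_nf

lemma iteratedDeriv_two (f : ℝ → ℂ) : iteratedDeriv 2 f = deriv (deriv f) := by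
  rw [show (2:ℕ) = 1+1 from rfl, iteratedDeriv_succ, iteratedDeriv_one]

lemma iteratedDeriv_three (f : ℝ → ℂ) : iteratedDeriv 3 f = deriv (deriv (deriv f)) := by
  rw [show (3:ℕ) = 2+1 from rfl, iteratedDeriv_succ, iteratedDeriv_two]

lemma sol3_kdv (lam : ℂ) (L : ℝ) (a1 b1 n1 a2 b2 n2 a3 b3 n3 : ℂ)
    (h1 : a1 * (n1^3 + n1 + lam) = 0) (h1' : b1 * (n1^3 + n1 + lam) = 0)
    (h1'' : b1 * (3*n1^2 + 1) = 0)
    (h2 : a2 * (n2^3 + n2 + lam) = 0) (h2' : b2 * (n2^3 + n2 + lam) = 0)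
    (h2'' : b2 * (3*n2^2 + 1) = 0)
    (h3 : a3 * (n3^3 + n3 + lam) = 0) (h3' : b3 * (n3^3 + n3 + lam) = 0)
    (h3'' : b3 * (3*n3^2 + 1) = 0) :
    KdVSpectralODE lam L (sol3 a1 b1 n1 a2 b2 n2 a3 b3 n3) := by
  refine ⟨sol3_contDiff _ _ _ _ _ _ _ _ _, fun x _ => ?_⟩
  rw [iteratedDeriv_three, sol3_deriv3, sol3_deriv]
  show lam * ((a1 + b1*x) * Complex.exp (n1*x) + (a2 + b2*x) * Complex.exp (n2*x)
      + (a3 + b3*x) * Complex.exp (n3*x)) + _ + _ = 0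
  show _ + ((a1*n1+b1 + b1*n1*x) * Complex.exp (n1*x) + (a2*n2+b2 + b2*n2*x) * Complex.exp (n2*x)
      + (a3*n3+b3 + b3*n3*x) * Complex.exp (n3*x))
      + ((a1*n1^3+3*b1*n1^2 + b1*n1^3*x) * Complex.exp (n1*x)
      + (a2*n2^3+3*b2*n2^2 + b2*n2^3*x) * Complex.exp (n2*x)
      + (a3*n3^3+3*b3*n3^2 + b3*n3^3*x) * Complex.exp (n3*x)) = 0
  linear_combination (Complex.exp (n1*x) * (1 + (x:ℂ) * 0)) * h1
    + Complex.exp (n1*x) * (x:ℂ) * h1' + Complex.exp (n1*x) * h1''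
    + Complex.exp (n2*x) * h2 + Complex.exp (n2*x) * (x:ℂ) * h2' + Complex.exp (n2*x) * h2''
    + Complex.exp (n3*x) * h3 + Complex.exp (n3*x) * (x:ℂ) * h3' + Complex.exp (n3*x) * h3''

lemma contDiff_deriv_of_3 {f : ℝ → ℂ} (h : ContDiff ℝ 3 f) : ContDiff ℝ 2 (deriv f) := by
  have h' : ContDiff ℝ ((2:ℕ∞)+1) f := by exact_mod_cast h
  exact (contDiff_succ_iff_deriv.mp h').2.2

lemma contDiff_deriv2_of_3 {f : ℝ → ℂ} (h : ContDiff ℝ 3 f) : ContDiff ℝ 1 (deriv (deriv f)) := by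
  have h' : ContDiff ℝ ((1:ℕ∞)+1) (deriv f) := by exact_mod_cast contDiff_deriv_of_3 h
  exact (contDiff_succ_iff_deriv.mp h').2.2

/-- the first-order system map as a continuous linear map over ℂ -/
def kdvA (lam : ℂ) : (ℂ × ℂ × ℂ) →L[ℂ] (ℂ × ℂ × ℂ) :=
  (((ContinuousLinearMap.fst ℂ ℂ ℂ).comp (ContinuousLinearMap.snd ℂ ℂ (ℂ × ℂ)))).prod
  ((((ContinuousLinearMap.snd ℂ ℂ ℂ).comp (ContinuousLinearMap.snd ℂ ℂ (ℂ × ℂ)))).prod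
   (-(lam • (ContinuousLinearMap.fst ℂ ℂ (ℂ × ℂ)))
     - ((ContinuousLinearMap.fst ℂ ℂ ℂ).comp (ContinuousLinearMap.snd ℂ ℂ (ℂ × ℂ)))))

lemma kdvA_apply (lam : ℂ) (p : ℂ × ℂ × ℂ) :
    kdvA lam p = (p.2.1, p.2.2, -(lam * p.1) - p.2.1) := by
  simp [kdvA, ContinuousLinearMap.prod_apply]

/-- the vector trajectory of a KdV solution -/
def kdvVec (φ : ℝ → ℂ) : ℝ → ℂ × ℂ × ℂ := fun x => (φ x, deriv φ x, deriv (deriv φ) x)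

lemma kdvVec_hasDerivAt {lam : ℂ} {L : ℝ} {φ : ℝ → ℂ} (hφ : KdVSpectralODE lam L φ)
    {x : ℝ} (hx : x ∈ Set.Icc (0:ℝ) L) :
    HasDerivAt (kdvVec φ) (kdvA lam (kdvVec φ x)) x := by
  obtain ⟨hc, hode⟩ := hφ
  have h1 : HasDerivAt φ (deriv φ x) x :=
    ((hc.differentiable (by norm_num)) x).hasDerivAt
  have h2 : HasDerivAt (deriv φ) (deriv (deriv φ) x) x :=
    (((contDiff_deriv_of_3 hc).differentiable (by norm_num)) x).hasDerivAt
  have h3 : HasDerivAt (deriv (deriv φ)) (deriv (deriv (deriv φ)) x) x :=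
    (((contDiff_deriv2_of_3 hc).differentiable (by norm_num)) x).hasDerivAt
  have hval : deriv (deriv (deriv φ)) x = -(lam * φ x) - deriv φ x := by
    have := hode x hx
    rw [iteratedDeriv_three] at this
    linear_combination this
  rw [kdvA_apply]
  have := h1.prodMk (h2.prodMk h3)
  rw [hval] at this
  exact this

lemma kdvVec_continuousOn {lam : ℂ} {L : ℝ} {φ : ℝ → ℂ} (hφ : KdVSpectralODE lam L φ) :
    ContinuousOn (kdvVec φ) (Set.Icc (0:ℝ) L) := by
  obtain ⟨hc, _⟩ := hφ
  exact (Continuous.prodMk (hc.continuous) ((Continuous.prodMk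
    ((contDiff_deriv_of_3 hc).continuous) ((contDiff_deriv2_of_3 hc).continuous)))).continuousOn

lemma kdv_unique_fwd {lam : ℂ} {L : ℝ} {f g : ℝ → ℂ}
    (hf : KdVSpectralODE lam L f) (hg : KdVSpectralODE lam L g)
    (h0 : f 0 = g 0) (h1 : deriv f 0 = deriv g 0)
    (h2 : deriv (deriv f) 0 = deriv (deriv g) 0) :
    Set.EqOn f g (Set.Icc 0 L) := by
  intro x hx
  have key : Set.EqOn (kdvVec f) (kdvVec g) (Set.Icc 0 L) := by
    apply ODE_solution_unique (v := fun _ p => kdvA lam p) (K := ‖kdvA lam‖₊)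
      (fun _ => (kdvA lam).lipschitz)
      (kdvVec_continuousOn hf)
      (fun t ht => (kdvVec_hasDerivAt hf (Set.Ico_subset_Icc_self ht)).hasDerivWithinAt)
      (kdvVec_continuousOn hg)
      (fun t ht => (kdvVec_hasDerivAt hg (Set.Ico_subset_Icc_self ht)).hasDerivWithinAt)
    show (f 0, deriv f 0, deriv (deriv f) 0) = (g 0, deriv g 0, deriv (deriv g) 0)
    rw [h0, h1, h2]
  exact congrArg Prod.fst (key hx)

lemma kdv_unique_bwd {lam : ℂ} {L : ℝ} {f g : ℝ → ℂ}
    (hf : KdVSpectralODE lam L f) (hg : KdVSpectralODE lam L g)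
    (h0 : f L = g L) (h1 : deriv f L = deriv g L)
    (h2 : deriv (deriv f) L = deriv (deriv g) L) :
    Set.EqOn f g (Set.Icc 0 L) := by
  intro x hx
  have key : Set.EqOn (kdvVec f) (kdvVec g) (Set.Icc 0 L) := by
    apply ODE_solution_unique_of_mem_Icc_left (v := fun _ p => kdvA lam p)
      (K := ‖kdvA lam‖₊) (s := fun _ => Set.univ)
      (fun _ _ => (kdvA lam).lipschitz.lipschitzOnWith)
      (kdvVec_continuousOn hf)
      (fun t ht => (kdvVec_hasDerivAt hf (Set.Ioc_subset_Icc_self ht)).hasDerivWithinAt)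
      (fun _ _ => Set.mem_univ _)
      (kdvVec_continuousOn hg)
      (fun t ht => (kdvVec_hasDerivAt hg (Set.Ioc_subset_Icc_self ht)).hasDerivWithinAt)
      (fun _ _ => Set.mem_univ _)
    show (f L, deriv f L, deriv (deriv f) L) = (g L, deriv g L, deriv (deriv g) L)
    rw [h0, h1, h2]
  exact congrArg Prod.fst (key hx)

lemma eqOn_deriv_Icc {L : ℝ} (hL : 0 < L) {f g : ℝ → ℂ}
    (hf : Differentiable ℝ f) (hg : Differentiable ℝ g)
    (h : Set.EqOn f g (Set.Icc 0 L)) :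
    Set.EqOn (deriv f) (deriv g) (Set.Icc 0 L) := by
  intro x hx
  have hU : UniqueDiffOn ℝ (Set.Icc (0:ℝ) L) := uniqueDiffOn_Icc hL
  have h1 : HasDerivWithinAt f (deriv f x) (Set.Icc 0 L) x := (hf x).hasDerivAt.hasDerivWithinAt
  have h2 : HasDerivWithinAt g (deriv f x) (Set.Icc 0 L) x := h1.congr (fun y hy => (h hy).symm) (h hx).symm
  have h3 : HasDerivWithinAt g (deriv g x) (Set.Icc 0 L) x := (hg x).hasDerivAt.hasDerivWithinAt
  have := h2.derivWithin (hU x hx)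
  rw [h3.derivWithin (hU x hx)] at this
  exact this.symm

lemma eqOn_deriv2_Icc {L : ℝ} (hL : 0 < L) {f g : ℝ → ℂ}
    (hf : ContDiff ℝ 3 f) (hg : ContDiff ℝ 3 g)
    (h : Set.EqOn f g (Set.Icc 0 L)) :
    Set.EqOn (deriv (deriv f)) (deriv (deriv g)) (Set.Icc 0 L) :=
  eqOn_deriv_Icc hL ((contDiff_deriv_of_3 hf).differentiable (by norm_num))
    ((contDiff_deriv_of_3 hg).differentiable (by norm_num))
    (eqOn_deriv_Icc hL (hf.differentiable (by norm_num)) (hg.differentiable (by norm_num)) h)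

/-- combination `c·u + d·v` -/
lemma deriv_combo (c d : ℂ) {u v : ℝ → ℂ} (hu : Differentiable ℝ u) (hv : Differentiable ℝ v) :
    deriv (fun x => c * u x + d * v x) = fun x => c * deriv u x + d * deriv v x := by
  funext x
  rw [deriv_fun_add ((hu x).const_mul c) ((hv x).const_mul d),
    deriv_const_mul c (hu x), deriv_const_mul d (hv x)]

lemma combo_contDiff (c d : ℂ) {u v : ℝ → ℂ} (hu : ContDiff ℝ 3 u) (hv : ContDiff ℝ 3 v) :
    ContDiff ℝ 3 (fun x => c * u x + d * v x) :=
  (contDiff_const.mul hu).add (contDiff_const.mul hv)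

lemma deriv2_combo (c d : ℂ) {u v : ℝ → ℂ} (hu : ContDiff ℝ 3 u) (hv : ContDiff ℝ 3 v) :
    deriv (deriv (fun x => c * u x + d * v x))
      = fun x => c * deriv (deriv u) x + d * deriv (deriv v) x := by
  rw [deriv_combo c d (hu.differentiable (by norm_num)) (hv.differentiable (by norm_num)),
    deriv_combo c d ((contDiff_deriv_of_3 hu).differentiable (by norm_num))
      ((contDiff_deriv_of_3 hv).differentiable (by norm_num))]

lemma deriv3_combo (c d : ℂ) {u v : ℝ → ℂ} (hu : ContDiff ℝ 3 u) (hv : ContDiff ℝ 3 v) :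
    deriv (deriv (deriv (fun x => c * u x + d * v x)))
      = fun x => c * deriv (deriv (deriv u)) x + d * deriv (deriv (deriv v)) x := by
  rw [deriv2_combo c d hu hv,
    deriv_combo c d ((contDiff_deriv2_of_3 hu).differentiable (by norm_num))
      ((contDiff_deriv2_of_3 hv).differentiable (by norm_num))]

lemma kdv_combo {lam : ℂ} {L : ℝ} (c d : ℂ) {u v : ℝ → ℂ}
    (hu : KdVSpectralODE lam L u) (hv : KdVSpectralODE lam L v) :
    KdVSpectralODE lam L (fun x => c * u x + d * v x) := by
  refine ⟨combo_contDiff c d hu.1 hv.1, fun x hx => ?_⟩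
  have h1 := hu.2 x hx
  have h2 := hv.2 x hx
  rw [iteratedDeriv_three] at h1 h2 ⊢
  rw [deriv3_combo c d hu.1 hv.1, deriv_combo c d (hu.1.differentiable (by norm_num))
    (hv.1.differentiable (by norm_num))]
  linear_combination c * h1 + d * h2

lemma kdv_zero (lam : ℂ) (L : ℝ) : KdVSpectralODE lam L (fun _ => 0) := by
  refine ⟨contDiff_const, fun x _ => ?_⟩
  simp [iteratedDeriv_three, deriv_const']

lemma boundary_system {N : ℕ} (hN : 3 ≤ N) {lam : ℂ} {L : ℝ} (hL : 0 < L)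
    (φ : Fin N → ℝ → ℂ)
    (hODE : ∀ j, KdVSpectralODE lam L (φ j))
    (h0eq : ∀ j, φ j 0 = φ ⟨0, Nat.lt_of_lt_of_le (Nat.succ_pos 2) hN⟩ 0)
    (hsum2 : (∑ j, iteratedDeriv 2 (φ j) 0) = 0)
    (hLv : ∀ j, φ j L = 0)
    (hd0 : ∀ j, deriv (φ j) 0 = 0)
    (hd1L : deriv (φ ⟨0, Nat.lt_of_lt_of_le (Nat.succ_pos 2) hN⟩) L = 0)
    (hd2L : ∀ j : Fin N, j ≠ ⟨0, Nat.lt_of_lt_of_le (Nat.succ_pos 2) hN⟩ → iteratedDeriv 2 (φ j) L = 0)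
    (hnt : ∃ j, ∃ x ∈ Set.Icc (0:ℝ) L, φ j x ≠ 0)
    {u v : ℝ → ℂ} (hu : KdVSpectralODE lam L u) (hv : KdVSpectralODE lam L v)
    (hu0 : u 0 = 1) (hu'0 : deriv u 0 = 0) (hu''0 : deriv (deriv u) 0 = 0)
    (hv0 : v 0 = 0) (hv'0 : deriv v 0 = 0) (hv''0 : deriv (deriv v) 0 = 1) :
    (v L = 0 ∧ deriv (deriv v) L = 0) ∨ (v L = 0 ∧ u L = 0) := by
  have h0L : (0:ℝ) ∈ Set.Icc (0:ℝ) L := ⟨le_refl _, hL.le⟩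
  have hLL : L ∈ Set.Icc (0:ℝ) L := ⟨hL.le, le_refl _⟩
  set i0 : Fin N := ⟨0, Nat.lt_of_lt_of_le (Nat.succ_pos 2) hN⟩ with hi0
  set c : ℂ := φ i0 0 with hc
  set d : Fin N → ℂ := fun j => deriv (deriv (φ j)) 0 with hd
  have hψ : ∀ j : Fin N, KdVSpectralODE lam L (fun x => c * u x + d j * v x) :=
    fun j => kdv_combo c (d j) hu hv
  have hEq : ∀ j, Set.EqOn (φ j) (fun x => c * u x + d j * v x) (Set.Icc 0 L) := by
    intro j
    apply kdv_unique_fwd (hODE j) (hψ j)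
    · show φ j 0 = c * u 0 + d j * v 0
      rw [hu0, hv0, h0eq j]; ring
    · rw [deriv_combo c (d j) (hu.1.differentiable (by norm_num))
        (hv.1.differentiable (by norm_num))]
      show deriv (φ j) 0 = c * deriv u 0 + d j * deriv v 0
      rw [hu'0, hv'0, hd0 j]; ring
    · rw [deriv2_combo c (d j) hu.1 hv.1]
      show deriv (deriv (φ j)) 0 = c * deriv (deriv u) 0 + d j * deriv (deriv v) 0
      rw [hu''0, hv''0]; ring
  have e1 : ∀ j, c * u L + d j * v L = 0 := by
    intro j
    have h := (hEq j hLL).symm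
    rw [hLv j] at h
    exact h
  have e2 : ∀ j : Fin N, j ≠ i0 → c * deriv (deriv u) L + d j * deriv (deriv v) L = 0 := by
    intro j hj
    have h := (eqOn_deriv2_Icc hL (hODE j).1 (hψ j).1 (hEq j) hLL).symm
    rw [deriv2_combo c (d j) hu.1 hv.1] at h
    have h2 := hd2L j hj
    rw [iteratedDeriv_two] at h2
    rw [h2] at h
    exact h
  have e3 : c * deriv u L + d i0 * deriv v L = 0 := by
    have h := (eqOn_deriv_Icc hL ((hODE i0).1.differentiable (by norm_num))
      ((hψ i0).1.differentiable (by norm_num)) (hEq i0) hLL).symm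
    rw [deriv_combo c (d i0) (hu.1.differentiable (by norm_num))
      (hv.1.differentiable (by norm_num))] at h
    rw [hd1L] at h
    exact h
  have e4 : (∑ j, d j) = 0 := by
    simp only [iteratedDeriv_two] at hsum2
    exact hsum2
  have hnt' : ¬ (c = 0 ∧ ∀ j, d j = 0) := by
    rintro ⟨hc0, hdz⟩
    obtain ⟨j, x, hx, hne⟩ := hnt
    apply hne
    rw [hEq j hx]
    simp [hc0, hdz j]
  by_cases hvL : v L = 0
  · by_cases hcz : c = 0
    · -- some j ≠ i0 with d j ≠ 0, giving v'' L = 0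
      have hex : ∃ j, j ≠ i0 ∧ d j ≠ 0 := by
        by_contra hno
        push_neg at hno
        apply hnt'
        refine ⟨hcz, fun j => ?_⟩
        by_cases hji : j = i0
        · rw [hji]
          have hss : (∑ k, d k) = d i0 := by
            apply Finset.sum_eq_single i0
            · intro k _ hk
              exact hno k hk
            · intro hk; exact absurd (Finset.mem_univ i0) hk
          rw [e4] at hss
          exact hss.symm
        · exact hno j hji
      obtain ⟨j, hji, hdj⟩ := hex
      left
      refine ⟨hvL, ?_⟩
      have := e2 j hji
      rw [hcz] at this
      simp only [zero_mul, zero_add] at this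
      exact (mul_eq_zero.mp this).resolve_left hdj
    · right
      refine ⟨hvL, ?_⟩
      have := e1 i0
      rw [hvL, mul_zero, add_zero] at this
      exact (mul_eq_zero.mp this).resolve_left hcz
  · -- v L ≠ 0 : contradiction
    exfalso
    have hdall : ∀ j, d j = -(c * u L) / v L := by
      intro j
      have := e1 j
      field_simp
      linear_combination this
    have hD0 : -(c * u L) / v L = 0 := by
      have hsum : (∑ j : Fin N, d j) = (N : ℂ) * (-(c * u L) / v L) := by
        rw [Finset.sum_congr rfl (fun j _ => hdall j)]
        simp [Finset.sum_const, Finset.card_univ]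
      rw [e4] at hsum
      have hNne : (N : ℂ) ≠ 0 := by
        simp only [ne_eq, Nat.cast_eq_zero]
        omega
      exact ((mul_eq_zero.mp hsum.symm).resolve_left hNne)
    have hdz : ∀ j, d j = 0 := fun j => by rw [hdall j, hD0]
    have hcuL : c * u L = 0 := by
      have := e1 i0
      rw [hdz i0, zero_mul, add_zero] at this
      exact this
    have hcz : c ≠ 0 := fun hc0 => hnt' ⟨hc0, hdz⟩
    have huL : u L = 0 := (mul_eq_zero.mp hcuL).resolve_left hcz
    have hj1 : (⟨1, by omega⟩ : Fin N) ≠ i0 := by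
      simp [hi0, Fin.ext_iff]
    have hu2L : deriv (deriv u) L = 0 := by
      have := e2 ⟨1, by omega⟩ hj1
      rw [hdz ⟨1, by omega⟩, zero_mul, add_zero] at this
      exact (mul_eq_zero.mp this).resolve_left hcz
    have hu1L : deriv u L = 0 := by
      have := e3
      rw [hdz i0, zero_mul, add_zero] at this
      exact (mul_eq_zero.mp this).resolve_left hcz
    have huzero : Set.EqOn u (fun _ => 0) (Set.Icc 0 L) := by
      apply kdv_unique_bwd hu (kdv_zero lam L)
      · simpa using huL
      · simpa [deriv_const'] using hu1L
      · simpa [deriv_const'] using hu2L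
    have := huzero h0L
    rw [hu0] at this
    exact one_ne_zero this

lemma cubic_roots (lam : ℂ) :
    ∃ ν₁ ν₂ : ℂ, (ν₁*ν₂ + ν₁*(-ν₁-ν₂) + ν₂*(-ν₁-ν₂) = 1) ∧
      (ν₁*ν₂*(-ν₁-ν₂) = -lam) := by
  obtain ⟨r, hr⟩ : ∃ r : ℂ, r^3 + r + lam = 0 := by
    have hdeg : 0 < (X^3 + X + C lam : ℂ[X]).degree := by
      have h1 : (X^3 + X + C lam : ℂ[X]).degree = 3 := by
        compute_degree!
      rw [h1]; norm_num
    obtain ⟨z, hz⟩ := Complex.exists_root hdeg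
    refine ⟨z, ?_⟩
    have := hz
    simp [IsRoot, eval_add, eval_pow, eval_X, eval_C] at this
    linear_combination this
  obtain ⟨q, hq⟩ : ∃ q : ℂ, q^2 = -3*r^2 - 4 := by
    obtain ⟨z, hz⟩ := IsAlgClosed.exists_pow_nat_eq (k := ℂ) (-3*r^2-4) (n := 2) (by norm_num)
    exact ⟨z, hz⟩
  refine ⟨r, (-r + q)/2, ?_, ?_⟩
  · linear_combination (-(1:ℂ)/4) * hq
  · linear_combination (-(r/4)) * hq + hr

lemma prop_of_rows (ν₁ ν₂ ν₃ E₁ E₂ E₃ : ℂ)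
    (h12 : ν₁ ≠ ν₂) (h13 : ν₁ ≠ ν₃) (h23 : ν₂ ≠ ν₃)
    (hE1 : E₁ ≠ 0) (hE2 : E₂ ≠ 0) (hE3 : E₃ ≠ 0)
    (hs : ν₁ + ν₂ + ν₃ = 0)
    (hq1 : (ν₂-ν₃)*E₁ + (ν₃-ν₁)*E₂ + (ν₁-ν₂)*E₃ = 0)
    (hq2 : (ν₁^2*(ν₂-ν₃)*E₁ + ν₂^2*(ν₃-ν₁)*E₂ + ν₃^2*(ν₁-ν₂)*E₃ = 0) ∨
           (ν₂*ν₃*(ν₂-ν₃)*E₁ + ν₃*ν₁*(ν₃-ν₁)*E₂ + ν₁*ν₂*(ν₁-ν₂)*E₃ = 0)) :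
    ∃ t, t ≠ 0 ∧ ν₁ ≠ 0 ∧ ν₂ ≠ 0 ∧ ν₃ ≠ 0 ∧
      E₁ = t * ν₁ ∧ E₂ = t * ν₂ ∧ E₃ = t * ν₃ := by
  have hv3 : ν₃ = -ν₁ - ν₂ := by linear_combination hs
  subst hv3
  have k12 : ν₁ - ν₂ ≠ 0 := sub_ne_zero.mpr h12
  have k13 : ν₁ - (-ν₁-ν₂) ≠ 0 := sub_ne_zero.mpr h13
  have k23 : ν₂ - (-ν₁-ν₂) ≠ 0 := sub_ne_zero.mpr h23
  -- pairwise proportionality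
  have p12 : ν₁ * E₂ - ν₂ * E₁ = 0 := by
    rcases hq2 with hq2 | hq2
    · have key : ((ν₁-ν₂)*(ν₂-(-ν₁-ν₂))*(ν₁-(-ν₁-ν₂))) * (ν₁*E₂ - ν₂*E₁)
          = (ν₁-ν₂) * (ν₁^2*(ν₂-(-ν₁-ν₂))*E₁ + ν₂^2*((-ν₁-ν₂)-ν₁)*E₂ + (-ν₁-ν₂)^2*(ν₁-ν₂)*E₃)
            - (-ν₁-ν₂)^2*(ν₁-ν₂) * ((ν₂-(-ν₁-ν₂))*E₁ + ((-ν₁-ν₂)-ν₁)*E₂ + (ν₁-ν₂)*E₃) := by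
        ring
      rw [hq1, hq2, mul_zero, mul_zero, sub_zero] at key
      exact (mul_eq_zero.mp key).resolve_left (by
        exact mul_ne_zero (mul_ne_zero k12 k23) k13)
    · have key : (((ν₁-ν₂)*(ν₂-(-ν₁-ν₂))*((-ν₁-ν₂)-ν₁))) * (ν₂*E₁ - ν₁*E₂)
          = (ν₁-ν₂) * (ν₂*(-ν₁-ν₂)*(ν₂-(-ν₁-ν₂))*E₁ + (-ν₁-ν₂)*ν₁*((-ν₁-ν₂)-ν₁)*E₂
              + ν₁*ν₂*(ν₁-ν₂)*E₃)
            - ν₁*ν₂*(ν₁-ν₂) * ((ν₂-(-ν₁-ν₂))*E₁ + ((-ν₁-ν₂)-ν₁)*E₂ + (ν₁-ν₂)*E₃) := by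
        ring
      rw [hq1, hq2, mul_zero, mul_zero, sub_zero] at key
      have h' := (mul_eq_zero.mp key).resolve_left (by
        refine mul_ne_zero (mul_ne_zero k12 k23) ?_
        intro h; apply k13; linear_combination -h)
      linear_combination -h'
  have p23 : ν₂ * E₃ - (-ν₁-ν₂) * E₂ = 0 := by
    rcases hq2 with hq2 | hq2
    · have key : ((ν₂-(-ν₁-ν₂))*((-ν₁-ν₂)-ν₁)*(ν₂-ν₁)) * (ν₂*E₃ - (-ν₁-ν₂)*E₂)
          = (ν₂-(-ν₁-ν₂)) * (ν₁^2*(ν₂-(-ν₁-ν₂))*E₁ + ν₂^2*((-ν₁-ν₂)-ν₁)*E₂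
              + (-ν₁-ν₂)^2*(ν₁-ν₂)*E₃)
            - ν₁^2*(ν₂-(-ν₁-ν₂)) * ((ν₂-(-ν₁-ν₂))*E₁ + ((-ν₁-ν₂)-ν₁)*E₂ + (ν₁-ν₂)*E₃) := by
        ring
      rw [hq1, hq2, mul_zero, mul_zero, sub_zero] at key
      refine (mul_eq_zero.mp key).resolve_left ?_
      refine mul_ne_zero (mul_ne_zero k23 ?_) (by intro h; apply k12; linear_combination -h)
      intro h; apply k13; linear_combination -h
    · have key : ((ν₂-(-ν₁-ν₂))*((-ν₁-ν₂)-ν₁)*(ν₂-ν₁)) * (ν₂*E₃ - (-ν₁-ν₂)*E₂)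
          = (ν₂-(-ν₁-ν₂)) * (ν₂*(-ν₁-ν₂)*(ν₂-(-ν₁-ν₂))*E₁ + (-ν₁-ν₂)*ν₁*((-ν₁-ν₂)-ν₁)*E₂
              + ν₁*ν₂*(ν₁-ν₂)*E₃)
            - ν₂*(-ν₁-ν₂)*(ν₂-(-ν₁-ν₂)) * ((ν₂-(-ν₁-ν₂))*E₁ + ((-ν₁-ν₂)-ν₁)*E₂ + (ν₁-ν₂)*E₃) := by
        ring
      rw [hq1, hq2, mul_zero, mul_zero, sub_zero] at key
      refine (mul_eq_zero.mp key).resolve_left ?_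
      refine mul_ne_zero (mul_ne_zero k23 ?_) (by intro h; apply k12; linear_combination -h)
      intro h; apply k13; linear_combination -h
  -- nonvanishing of the roots
  have hn2 : ν₂ ≠ 0 := by
    intro h
    rw [h] at p12
    have : ν₁ * E₂ = 0 := by linear_combination p12
    have h1 : ν₁ = 0 := (mul_eq_zero.mp this).resolve_right hE2
    exact h12 (h1.trans h.symm)
  have hn1 : ν₁ ≠ 0 := by
    intro h
    rw [h] at p12
    have : ν₂ * E₁ = 0 := by linear_combination -p12
    exact hn2 ((mul_eq_zero.mp this).resolve_right hE1)
  have hn3 : (-ν₁-ν₂) ≠ 0 := by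
    intro h
    rw [h] at p23
    have : ν₂ * E₃ = 0 := by linear_combination p23
    exact hn2 ((mul_eq_zero.mp this).resolve_right hE3)
  refine ⟨E₁ / ν₁, div_ne_zero hE1 hn1, hn1, hn2, hn3, ?_, ?_, ?_⟩
  · field_simp
  · rw [div_mul_eq_mul_div, eq_div_iff hn1]
    linear_combination p12
  · rw [div_mul_eq_mul_div, eq_div_iff hn1]
    have key : ν₂ * (E₃ * ν₁) = ν₂ * (E₁ * (-ν₁ - ν₂)) := by
      linear_combination ν₁ * p23 + (-ν₁-ν₂) * p12
    exact mul_left_cancel₀ hn2 key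
lemma nstar_of_prop {L : ℝ} (hL : 0 < L) (ν₁ ν₂ ν₃ t : ℂ)
    (hs : ν₁ + ν₂ + ν₃ = 0) (he2 : ν₁*ν₂ + ν₁*ν₃ + ν₂*ν₃ = 1)
    (hn1 : ν₁ ≠ 0) (hn2 : ν₂ ≠ 0) (hn3 : ν₃ ≠ 0) (ht : t ≠ 0)
    (hE1 : Complex.exp (ν₁ * L) = t * ν₁)
    (hE2 : Complex.exp (ν₂ * L) = t * ν₂)
    (hE3 : Complex.exp (ν₃ * L) = t * ν₃) :
    L ∈ criticalNStar := by
  have hv3 : ν₃ = -ν₁ - ν₂ := by linear_combination hs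
  subst hv3
  have ha : (-(ν₁*(L:ℂ))) * Complex.exp (-(ν₁*(L:ℂ))) = -L/t := by
    rw [Complex.exp_neg, hE1]
    field_simp
  have hb : (-(ν₂*(L:ℂ))) * Complex.exp (-(ν₂*(L:ℂ))) = -L/t := by
    rw [Complex.exp_neg, hE2]
    field_simp
  have hc : (-((-ν₁-ν₂)*(L:ℂ))) * Complex.exp (-((-ν₁-ν₂)*(L:ℂ))) = -L/t := by
    rw [Complex.exp_neg, hE3]
    field_simp
  refine ⟨hL, -(ν₁*(L:ℂ)), -(ν₂*(L:ℂ)), ?_, ?_, ?_⟩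
  · rw [ha, hb]
  · rw [hb, show (-(-(ν₁*(L:ℂ)) + -(ν₂*(L:ℂ)))) = -((-ν₁-ν₂)*(L:ℂ)) by ring, hc]
  · linear_combination (-(L:ℂ)^2) * he2

set_option maxHeartbeats 1000000 in
lemma lagB (ν₁ ν₂ ν₃ : ℂ) (k12 : ν₁ - ν₂ ≠ 0) (k13 : ν₁ - ν₃ ≠ 0) (k23 : ν₂ - ν₃ ≠ 0)
    (k21 : ν₂ - ν₁ ≠ 0) (k31 : ν₃ - ν₁ ≠ 0) (k32 : ν₃ - ν₂ ≠ 0) :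
    (ν₂*ν₃/((ν₁-ν₂)*(ν₁-ν₃)) + ν₃*ν₁/((ν₂-ν₁)*(ν₂-ν₃)) + ν₁*ν₂/((ν₃-ν₁)*(ν₃-ν₂)) = 1)
    ∧ (ν₂*ν₃/((ν₁-ν₂)*(ν₁-ν₃))*ν₁ + ν₃*ν₁/((ν₂-ν₁)*(ν₂-ν₃))*ν₂ + ν₁*ν₂/((ν₃-ν₁)*(ν₃-ν₂))*ν₃ = 0)
    ∧ (ν₂*ν₃/((ν₁-ν₂)*(ν₁-ν₃))*ν₁^2 + ν₃*ν₁/((ν₂-ν₁)*(ν₂-ν₃))*ν₂^2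
        + ν₁*ν₂/((ν₃-ν₁)*(ν₃-ν₂))*ν₃^2 = 0) := by
  refine ⟨?_, ?_, ?_⟩ <;> (field_simp; ring)
set_option maxHeartbeats 1000000 in
lemma lagC (ν₁ ν₂ ν₃ : ℂ) (k12 : ν₁ - ν₂ ≠ 0) (k13 : ν₁ - ν₃ ≠ 0) (k23 : ν₂ - ν₃ ≠ 0)
    (k21 : ν₂ - ν₁ ≠ 0) (k31 : ν₃ - ν₁ ≠ 0) (k32 : ν₃ - ν₂ ≠ 0) :
    ((1:ℂ)/((ν₁-ν₂)*(ν₁-ν₃)) + 1/((ν₂-ν₁)*(ν₂-ν₃)) + 1/((ν₃-ν₁)*(ν₃-ν₂)) = 0)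
    ∧ ((1:ℂ)/((ν₁-ν₂)*(ν₁-ν₃))*ν₁ + 1/((ν₂-ν₁)*(ν₂-ν₃))*ν₂ + 1/((ν₃-ν₁)*(ν₃-ν₂))*ν₃ = 0)
    ∧ ((1:ℂ)/((ν₁-ν₂)*(ν₁-ν₃))*ν₁^2 + 1/((ν₂-ν₁)*(ν₂-ν₃))*ν₂^2
        + 1/((ν₃-ν₁)*(ν₃-ν₂))*ν₃^2 = 1) := by
  refine ⟨?_, ?_, ?_⟩ <;> (field_simp; ring)
set_option maxHeartbeats 1000000 in
lemma clearC (ν₁ ν₂ ν₃ : ℂ) (k12 : ν₁ - ν₂ ≠ 0) (k13 : ν₁ - ν₃ ≠ 0) (k23 : ν₂ - ν₃ ≠ 0)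
    (k21 : ν₂ - ν₁ ≠ 0) (k31 : ν₃ - ν₁ ≠ 0) (k32 : ν₃ - ν₂ ≠ 0) :
    (((ν₁-ν₂)*(ν₁-ν₃)*(ν₂-ν₃)) * ((1:ℂ)/((ν₁-ν₂)*(ν₁-ν₃))) = ν₂-ν₃)
    ∧ (((ν₁-ν₂)*(ν₁-ν₃)*(ν₂-ν₃)) * ((1:ℂ)/((ν₂-ν₁)*(ν₂-ν₃))) = ν₃-ν₁)
    ∧ (((ν₁-ν₂)*(ν₁-ν₃)*(ν₂-ν₃)) * ((1:ℂ)/((ν₃-ν₁)*(ν₃-ν₂))) = ν₁-ν₂)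
    ∧ (((ν₁-ν₂)*(ν₁-ν₃)*(ν₂-ν₃)) * (ν₂*ν₃/((ν₁-ν₂)*(ν₁-ν₃))) = ν₂*ν₃*(ν₂-ν₃))
    ∧ (((ν₁-ν₂)*(ν₁-ν₃)*(ν₂-ν₃)) * (ν₃*ν₁/((ν₂-ν₁)*(ν₂-ν₃))) = ν₃*ν₁*(ν₃-ν₁))
    ∧ (((ν₁-ν₂)*(ν₁-ν₃)*(ν₂-ν₃)) * (ν₁*ν₂/((ν₃-ν₁)*(ν₃-ν₂))) = ν₁*ν₂*(ν₁-ν₂)) := by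
  refine ⟨?_, ?_, ?_, ?_, ?_, ?_⟩ <;> (field_simp; try ring)

lemma sol3_apply (a1 b1 n1 a2 b2 n2 a3 b3 n3 : ℂ) (x : ℝ) :
    sol3 a1 b1 n1 a2 b2 n2 a3 b3 n3 x
      = (a1 + b1*x) * Complex.exp (n1*x) + (a2 + b2*x) * Complex.exp (n2*x)
        + (a3 + b3*x) * Complex.exp (n3*x) := rfl


def uFun (ν₁ ν₂ ν₃ : ℂ) : ℝ → ℂ :=
  sol3 (ν₂*ν₃/((ν₁-ν₂)*(ν₁-ν₃))) 0 ν₁ (ν₃*ν₁/((ν₂-ν₁)*(ν₂-ν₃))) 0 ν₂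
    (ν₁*ν₂/((ν₃-ν₁)*(ν₃-ν₂))) 0 ν₃
def vFun (ν₁ ν₂ ν₃ : ℂ) : ℝ → ℂ :=
  sol3 ((1:ℂ)/((ν₁-ν₂)*(ν₁-ν₃))) 0 ν₁ ((1:ℂ)/((ν₂-ν₁)*(ν₂-ν₃))) 0 ν₂
    ((1:ℂ)/((ν₃-ν₁)*(ν₃-ν₂))) 0 ν₃

set_option maxHeartbeats 1000000 in
/-- Distinct-roots case of the forward direction, after `boundary_system`. -/
lemma forward_distinct {lam : ℂ} {L : ℝ} (hL : 0 < L) (ν₁ ν₂ ν₃ : ℂ)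
    (hs : ν₁ + ν₂ + ν₃ = 0) (he2 : ν₁*ν₂ + ν₁*ν₃ + ν₂*ν₃ = 1)
    (h12 : ν₁ ≠ ν₂) (h13 : ν₁ ≠ ν₃) (h23 : ν₂ ≠ ν₃)
    (hbc : ∀ u v : ℝ → ℂ, KdVSpectralODE lam L u → KdVSpectralODE lam L v →
      u 0 = 1 → deriv u 0 = 0 → deriv (deriv u) 0 = 0 →
      v 0 = 0 → deriv v 0 = 0 → deriv (deriv v) 0 = 1 →
      (v L = 0 ∧ deriv (deriv v) L = 0) ∨ (v L = 0 ∧ u L = 0))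
    (hr1 : ν₁^3 + ν₁ + lam = 0) (hr2 : ν₂^3 + ν₂ + lam = 0) (hr3 : ν₃^3 + ν₃ + lam = 0) :
    L ∈ criticalNStar := by
  have k12 : ν₁ - ν₂ ≠ 0 := sub_ne_zero.mpr h12
  have k13 : ν₁ - ν₃ ≠ 0 := sub_ne_zero.mpr h13
  have k23 : ν₂ - ν₃ ≠ 0 := sub_ne_zero.mpr h23
  have k21 : ν₂ - ν₁ ≠ 0 := sub_ne_zero.mpr (Ne.symm h12)
  have k31 : ν₃ - ν₁ ≠ 0 := sub_ne_zero.mpr (Ne.symm h13)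
  have k32 : ν₃ - ν₂ ≠ 0 := sub_ne_zero.mpr (Ne.symm h23)
  have LB := lagB ν₁ ν₂ ν₃ k12 k13 k23 k21 k31 k32
  have LC := lagC ν₁ ν₂ ν₃ k12 k13 k23 k21 k31 k32
  have CC := clearC ν₁ ν₂ ν₃ k12 k13 k23 k21 k31 k32
  have hu : KdVSpectralODE lam L (uFun ν₁ ν₂ ν₃) := by
    unfold uFun
    exact sol3_kdv lam L _ _ _ _ _ _ _ _ _
      (by rw [hr1]; ring) (by ring) (by ring)
      (by rw [hr2]; ring) (by ring) (by ring)
      (by rw [hr3]; ring) (by ring) (by ring)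
  have hv : KdVSpectralODE lam L (vFun ν₁ ν₂ ν₃) := by
    unfold vFun
    exact sol3_kdv lam L _ _ _ _ _ _ _ _ _
      (by rw [hr1]; ring) (by ring) (by ring)
      (by rw [hr2]; ring) (by ring) (by ring)
      (by rw [hr3]; ring) (by ring) (by ring)
  have hu0 : uFun ν₁ ν₂ ν₃ 0 = 1 := by
    unfold uFun; rw [sol3_zero]; linear_combination LB.1
  have hu'0 : deriv (uFun ν₁ ν₂ ν₃) 0 = 0 := by
    unfold uFun; rw [sol3_deriv, sol3_zero]; linear_combination LB.2.1
  have hu''0 : deriv (deriv (uFun ν₁ ν₂ ν₃)) 0 = 0 := by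
    unfold uFun; rw [sol3_deriv, sol3_deriv, sol3_zero]; linear_combination LB.2.2
  have hv0 : vFun ν₁ ν₂ ν₃ 0 = 0 := by
    unfold vFun; rw [sol3_zero]; linear_combination LC.1
  have hv'0 : deriv (vFun ν₁ ν₂ ν₃) 0 = 0 := by
    unfold vFun; rw [sol3_deriv, sol3_zero]; linear_combination LC.2.1
  have hv''0 : deriv (deriv (vFun ν₁ ν₂ ν₃)) 0 = 1 := by
    unfold vFun; rw [sol3_deriv, sol3_deriv, sol3_zero]; linear_combination LC.2.2
  have hvL_eq : vFun ν₁ ν₂ ν₃ L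
      = (1:ℂ)/((ν₁-ν₂)*(ν₁-ν₃)) * Complex.exp (ν₁*L)
        + (1:ℂ)/((ν₂-ν₁)*(ν₂-ν₃)) * Complex.exp (ν₂*L)
        + (1:ℂ)/((ν₃-ν₁)*(ν₃-ν₂)) * Complex.exp (ν₃*L) := by
    unfold vFun; rw [sol3_apply]; ring
  have hv2L_eq : deriv (deriv (vFun ν₁ ν₂ ν₃)) L
      = (1:ℂ)/((ν₁-ν₂)*(ν₁-ν₃)) * ν₁^2 * Complex.exp (ν₁*L)
        + (1:ℂ)/((ν₂-ν₁)*(ν₂-ν₃)) * ν₂^2 * Complex.exp (ν₂*L)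
        + (1:ℂ)/((ν₃-ν₁)*(ν₃-ν₂)) * ν₃^2 * Complex.exp (ν₃*L) := by
    unfold vFun; rw [sol3_deriv, sol3_deriv, sol3_apply]; ring
  have huL_eq : uFun ν₁ ν₂ ν₃ L
      = ν₂*ν₃/((ν₁-ν₂)*(ν₁-ν₃)) * Complex.exp (ν₁*L)
        + ν₃*ν₁/((ν₂-ν₁)*(ν₂-ν₃)) * Complex.exp (ν₂*L)
        + ν₁*ν₂/((ν₃-ν₁)*(ν₃-ν₂)) * Complex.exp (ν₃*L) := by
    unfold uFun; rw [sol3_apply]; ring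
  rcases hbc _ _ hu hv hu0 hu'0 hu''0 hv0 hv'0 hv''0 with ⟨hA1, hA2⟩ | ⟨hA1, hB⟩
  · rw [hvL_eq] at hA1
    rw [hv2L_eq] at hA2
    have q1 : (ν₂-ν₃)*Complex.exp (ν₁*L) + (ν₃-ν₁)*Complex.exp (ν₂*L)
        + (ν₁-ν₂)*Complex.exp (ν₃*L) = 0 := by
      linear_combination ((ν₁-ν₂)*(ν₁-ν₃)*(ν₂-ν₃)) * hA1
        - Complex.exp (ν₁*L) * CC.1 - Complex.exp (ν₂*L) * CC.2.1
        - Complex.exp (ν₃*L) * CC.2.2.1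
    have q2 : ν₁^2*(ν₂-ν₃)*Complex.exp (ν₁*L) + ν₂^2*(ν₃-ν₁)*Complex.exp (ν₂*L)
        + ν₃^2*(ν₁-ν₂)*Complex.exp (ν₃*L) = 0 := by
      linear_combination ((ν₁-ν₂)*(ν₁-ν₃)*(ν₂-ν₃)) * hA2
        - ν₁^2*Complex.exp (ν₁*L) * CC.1 - ν₂^2*Complex.exp (ν₂*L) * CC.2.1
        - ν₃^2*Complex.exp (ν₃*L) * CC.2.2.1
    obtain ⟨t, ht, hn1, hn2, hn3, p1, p2, p3⟩ :=
      prop_of_rows ν₁ ν₂ ν₃ _ _ _ h12 h13 h23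
        (Complex.exp_ne_zero _) (Complex.exp_ne_zero _) (Complex.exp_ne_zero _)
        hs q1 (Or.inl q2)
    exact nstar_of_prop hL ν₁ ν₂ ν₃ t hs he2 hn1 hn2 hn3 ht p1 p2 p3
  · rw [hvL_eq] at hA1
    rw [huL_eq] at hB
    have q1 : (ν₂-ν₃)*Complex.exp (ν₁*L) + (ν₃-ν₁)*Complex.exp (ν₂*L)
        + (ν₁-ν₂)*Complex.exp (ν₃*L) = 0 := by
      linear_combination ((ν₁-ν₂)*(ν₁-ν₃)*(ν₂-ν₃)) * hA1
        - Complex.exp (ν₁*L) * CC.1 - Complex.exp (ν₂*L) * CC.2.1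
        - Complex.exp (ν₃*L) * CC.2.2.1
    have q2 : ν₂*ν₃*(ν₂-ν₃)*Complex.exp (ν₁*L) + ν₃*ν₁*(ν₃-ν₁)*Complex.exp (ν₂*L)
        + ν₁*ν₂*(ν₁-ν₂)*Complex.exp (ν₃*L) = 0 := by
      linear_combination ((ν₁-ν₂)*(ν₁-ν₃)*(ν₂-ν₃)) * hB
        - Complex.exp (ν₁*L) * CC.2.2.2.1 - Complex.exp (ν₂*L) * CC.2.2.2.2.1
        - Complex.exp (ν₃*L) * CC.2.2.2.2.2
    obtain ⟨t, ht, hn1, hn2, hn3, p1, p2, p3⟩ :=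
      prop_of_rows ν₁ ν₂ ν₃ _ _ _ h12 h13 h23
        (Complex.exp_ne_zero _) (Complex.exp_ne_zero _) (Complex.exp_ne_zero _)
        hs q1 (Or.inr q2)
    exact nstar_of_prop hL ν₁ ν₂ ν₃ t hs he2 hn1 hn2 hn3 ht p1 p2 p3



set_option maxHeartbeats 1000000 in
lemma forward_degenerate {lam : ℂ} {L : ℝ} (μ : ℂ)
    (hb : 3*μ^2 + 1 = 0) (hroot : μ^3 + μ + lam = 0)
    (hbc : ∀ u v : ℝ → ℂ, KdVSpectralODE lam L u → KdVSpectralODE lam L v →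
      u 0 = 1 → deriv u 0 = 0 → deriv (deriv u) 0 = 0 →
      v 0 = 0 → deriv v 0 = 0 → deriv (deriv v) 0 = 1 →
      (v L = 0 ∧ deriv (deriv v) L = 0) ∨ (v L = 0 ∧ u L = 0)) :
    False := by
  have hμ : μ ≠ 0 := by intro h; rw [h] at hb; norm_num at hb
  have hτ : (-2*μ)^3 + (-2*μ) + lam = 0 := by linear_combination hroot - 3*μ*hb
  have hu : KdVSpectralODE lam L (sol3 (8/9) (-(2*μ)/3) μ (1/9) 0 (-2*μ) 0 0 0) :=
    sol3_kdv lam L _ _ _ _ _ _ _ _ _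
      (by rw [hroot]; ring) (by rw [hroot]; ring) (by rw [hb]; ring)
      (by rw [hτ]; ring) (by ring) (by ring)
      (by ring) (by ring) (by ring)
  have hv : KdVSpectralODE lam L (sol3 (1/3) (-μ) μ (-1/3) 0 (-2*μ) 0 0 0) :=
    sol3_kdv lam L _ _ _ _ _ _ _ _ _
      (by rw [hroot]; ring) (by rw [hroot]; ring) (by rw [hb]; ring)
      (by rw [hτ]; ring) (by ring) (by ring)
      (by ring) (by ring) (by ring)
  have hu0 : sol3 (8/9) (-(2*μ)/3) μ (1/9) 0 (-2*μ) 0 0 0 0 = 1 := by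
    rw [sol3_zero]; norm_num
  have hu'0 : deriv (sol3 (8/9) (-(2*μ)/3) μ (1/9) 0 (-2*μ) 0 0 0) 0 = 0 := by
    rw [sol3_deriv, sol3_zero]; ring
  have hu''0 : deriv (deriv (sol3 (8/9) (-(2*μ)/3) μ (1/9) 0 (-2*μ) 0 0 0)) 0 = 0 := by
    rw [sol3_deriv, sol3_deriv, sol3_zero]; ring
  have hv0 : sol3 (1/3) (-μ) μ (-1/3) 0 (-2*μ) 0 0 0 0 = 0 := by
    rw [sol3_zero]; norm_num
  have hv'0 : deriv (sol3 (1/3) (-μ) μ (-1/3) 0 (-2*μ) 0 0 0) 0 = 0 := by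
    rw [sol3_deriv, sol3_zero]; ring
  have hv''0 : deriv (deriv (sol3 (1/3) (-μ) μ (-1/3) 0 (-2*μ) 0 0 0)) 0 = 1 := by
    rw [sol3_deriv, sol3_deriv, sol3_zero]; linear_combination -hb
  have hWV : Complex.exp ((-2*μ)*(L:ℂ)) * Complex.exp (μ*(L:ℂ)) * Complex.exp (μ*(L:ℂ)) = 1 := by
    rw [← Complex.exp_add, ← Complex.exp_add,
      show ((-2*μ)*(L:ℂ) + μ*(L:ℂ) + μ*(L:ℂ)) = 0 by ring, Complex.exp_zero]
  set W : ℂ := Complex.exp (μ*(L:ℂ)) with hW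
  -- the value W^3 = -1/2 in both cases
  have hX : W*W*W = -(1/2) := by
    rcases hbc _ _ hu hv hu0 hu'0 hu''0 hv0 hv'0 hv''0 with ⟨hA1, hA2⟩ | ⟨hA1, hBu⟩
    · rw [sol3_apply] at hA1
      rw [sol3_deriv, sol3_deriv, sol3_apply] at hA2
      push_cast at hA1 hA2
      have e1 : (1 - 3*μ*L)*(W*W*W) = 1 := by
        linear_combination 3*W*W*hA1 + hWV
      have e2 : (-5*μ^2 - 3*μ^3*L)*(W*W*W) = 4*μ^2 := by
        linear_combination 3*W*W*hA2 + 4*μ^2*hWV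
      have h6 : μ^2*((6:ℂ)*(W*W*W)) = μ^2*(-3) := by
        linear_combination μ^2*e1 - e2
      have h6' := mul_left_cancel₀ (pow_ne_zero 2 hμ) h6
      linear_combination (1/6 : ℂ) * h6'
    · rw [sol3_apply] at hA1 hBu
      push_cast at hA1 hBu
      have e1 : (1 - 3*μ*L)*(W*W*W) = 1 := by
        linear_combination 3*W*W*hA1 + hWV
      have eB : (8 - 6*μ*L)*(W*W*W) = -1 := by
        linear_combination 9*W*W*hBu - hWV
      have h6 : (-6:ℂ)*(W*W*W) = 3 := by
        linear_combination 2*e1 - eB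
      linear_combination (-1/6 : ℂ) * h6
  -- modulus contradiction
  have hb' : μ*μ = ((-1/3 : ℝ):ℂ) := by push_cast; linear_combination (1/3 : ℂ) * hb
  have h1 := congrArg Complex.re hb'
  have h2 := congrArg Complex.im hb'
  simp [Complex.mul_re, Complex.mul_im, Complex.ofReal_re, Complex.ofReal_im] at h1 h2
  have hprod : μ.re * μ.im = 0 := by linarith
  have hre : μ.re = 0 := by
    rcases mul_eq_zero.mp hprod with h | h
    · exact h
    · rw [h] at h1; nlinarith [mul_self_nonneg μ.re]
  have habs : ‖W*W*W‖ = 1 := by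
    rw [hW, ← Complex.exp_add, ← Complex.exp_add, Complex.norm_exp]
    have : (μ*(L:ℂ) + μ*(L:ℂ) + μ*(L:ℂ)).re = 0 := by
      simp [Complex.add_re, Complex.mul_re, Complex.ofReal_re, Complex.ofReal_im, hre]
    rw [this, Real.exp_zero]
  rw [hX] at habs
  simp at habs



lemma deriv_smul_fun (c : ℂ) {v : ℝ → ℂ} (hv : Differentiable ℝ v) :
    deriv (fun x => c * v x) = fun x => c * deriv v x :=
  funext fun x => deriv_const_mul c (hv x)

lemma kdv_smul {lam : ℂ} {L : ℝ} (c : ℂ) {v : ℝ → ℂ} (hv : KdVSpectralODE lam L v) :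
    KdVSpectralODE lam L (fun x => c * v x) := by
  refine ⟨contDiff_const.mul hv.1, fun x hx => ?_⟩
  have h := hv.2 x hx
  rw [iteratedDeriv_three] at h ⊢
  rw [deriv_smul_fun c (hv.1.differentiable (by norm_num)),
    deriv_smul_fun c ((contDiff_deriv_of_3 hv.1).differentiable (by norm_num)),
    deriv_smul_fun c ((contDiff_deriv2_of_3 hv.1).differentiable (by norm_num))]
  linear_combination c * h

lemma deriv2_smul_fun (c : ℂ) {v : ℝ → ℂ} (hv : ContDiff ℝ 3 v) :
    deriv (deriv (fun x => c * v x)) = fun x => c * deriv (deriv v) x := by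
  rw [deriv_smul_fun c (hv.differentiable (by norm_num)),
    deriv_smul_fun c ((contDiff_deriv_of_3 hv).differentiable (by norm_num))]

/-- helper: no purely imaginary cube root of `-2`. -/
lemma no_exp3 (z : ℂ) (L : ℝ) (hL : 0 < L) (hz2 : (L:ℂ)^2 = -3*z^2)
    (he : Complex.exp (3*z) = -2) : False := by
  have hz2' : z*z = ((-(L^2)/3 : ℝ):ℂ) := by push_cast; linear_combination (1/3 : ℂ)*hz2
  have h1 : z.re * z.re - z.im * z.im = -(L*L)/3 := by
    have := congrArg Complex.re hz2'
    simpa [Complex.mul_re, pow_two, Complex.ofReal_re, Complex.ofReal_im] using this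
  have h2 : z.re * z.im + z.im * z.re = 0 := by
    have := congrArg Complex.im hz2'
    simpa [Complex.mul_im, pow_two, Complex.ofReal_re, Complex.ofReal_im] using this
  have hprod : z.re * z.im = 0 := by linarith
  have hre : z.re = 0 := by
    rcases mul_eq_zero.mp hprod with h | h
    · exact h
    · rw [h] at h1; nlinarith [mul_self_nonneg z.re, mul_pos hL hL]
  have habs : ‖Complex.exp (3*z)‖ = 1 := by
    rw [Complex.norm_exp]
    have : (3*z).re = 0 := by simp [Complex.mul_re, hre]
    rw [this, Real.exp_zero]
  rw [he] at habs
  simp at habs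

set_option maxHeartbeats 1000000 in
lemma backward_dir {N : ℕ} (hN : 3 ≤ N) {L : ℝ} (hL : 0 < L) (hmem : L ∈ criticalNStar) :
    ∃ lam : ℂ, ∃ φ : Fin N → ℝ → ℂ,
      (∀ j, KdVSpectralODE lam L (φ j)) ∧
      (∀ j, φ j 0 = φ ⟨0, Nat.lt_of_lt_of_le (Nat.succ_pos 2) hN⟩ 0) ∧
      (∑ j, iteratedDeriv 2 (φ j) 0) = 0 ∧
      (∀ j, φ j L = 0) ∧
      (∀ j, deriv (φ j) 0 = 0) ∧
      deriv (φ ⟨0, Nat.lt_of_lt_of_le (Nat.succ_pos 2) hN⟩) L = 0 ∧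
      (∀ j : Fin N, j ≠ ⟨0, Nat.lt_of_lt_of_le (Nat.succ_pos 2) hN⟩ → iteratedDeriv 2 (φ j) L = 0) ∧
      (∃ j, ∃ x ∈ Set.Icc (0 : ℝ) L, φ j x ≠ 0) := by
  obtain ⟨-, a, b, hk1, hk2, hL2⟩ := hmem
  have hLne : (L:ℂ) ≠ 0 := by
    simpa using Complex.ofReal_ne_zero.mpr hL.ne'
  -- write c for -(a+b)
  set c : ℂ := -(a+b) with hcdef
  have hk2' : b * Complex.exp b = c * Complex.exp c := hk2
  -- distinctness
  have hab : a ≠ b := by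
    intro h
    have ha0 : a ≠ 0 := by
      intro h0
      apply hLne
      have hz : (L:ℂ)^2 = 0 := by rw [hL2, h0, ← h, h0]; ring
      exact pow_eq_zero_iff (by norm_num) |>.mp hz
    have hc' : c = -(a+a) := by rw [hcdef, ← h]
    have h3 : a * Complex.exp (3*a) = a * (-2) :=
      calc a * Complex.exp (3*a) = (a * Complex.exp a) * Complex.exp (a+a) := by
            rw [mul_assoc, ← Complex.exp_add]; ring_nf
        _ = (c * Complex.exp c) * Complex.exp (a+a) := by rw [hk1, h, hk2']
        _ = a * (-2) := by
            rw [hc', Complex.exp_neg, mul_assoc, inv_mul_cancel₀ (Complex.exp_ne_zero _)]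
            ring
    have := mul_left_cancel₀ ha0 h3
    exact no_exp3 a L hL (by rw [hL2, ← h]; ring) this
  have hac : a ≠ c := by
    intro h
    have hb' : b = -2*a := by rw [hcdef] at h; linear_combination h
    have ha0 : a ≠ 0 := by
      intro h0
      apply hLne
      have hz : (L:ℂ)^2 = 0 := by rw [hL2, h0, hb', h0]; ring
      exact pow_eq_zero_iff (by norm_num) |>.mp hz
    have h3 : a * Complex.exp (3*a) = a * (-2) :=
      calc a * Complex.exp (3*a) = (a * Complex.exp a) * Complex.exp (a+a) := by
            rw [mul_assoc, ← Complex.exp_add]; ring_nf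
        _ = (b * Complex.exp b) * Complex.exp (a+a) := by rw [hk1]
        _ = a * (-2) := by
            rw [hb', show ((-2*a : ℂ)) = -(a+a) by ring, Complex.exp_neg, mul_assoc,
              inv_mul_cancel₀ (Complex.exp_ne_zero _)]
            ring
    have := mul_left_cancel₀ ha0 h3
    exact no_exp3 a L hL (by rw [hL2, hb']; ring) this
  have hbc : b ≠ c := by
    intro h
    have ha' : a = -2*b := by rw [hcdef] at h; linear_combination h
    have hb0 : b ≠ 0 := by
      intro h0
      apply hLne
      have hz : (L:ℂ)^2 = 0 := by rw [hL2, ha', h0]; ring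
      exact pow_eq_zero_iff (by norm_num) |>.mp hz
    have h3 : b * Complex.exp (3*b) = b * (-2) :=
      calc b * Complex.exp (3*b) = (b * Complex.exp b) * Complex.exp (b+b) := by
            rw [mul_assoc, ← Complex.exp_add]; ring_nf
        _ = (a * Complex.exp a) * Complex.exp (b+b) := by rw [hk1]
        _ = b * (-2) := by
            rw [ha', show ((-2*b : ℂ)) = -(b+b) by ring, Complex.exp_neg, mul_assoc,
              inv_mul_cancel₀ (Complex.exp_ne_zero _)]
            ring
    have := mul_left_cancel₀ hb0 h3
    exact no_exp3 b L hL (by rw [hL2, ha']; ring) this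
  -- nonvanishing
  have ha0 : a ≠ 0 := by
    intro h
    have : b * Complex.exp b = 0 := by rw [← hk1, h, zero_mul]
    have hb0 : b = 0 := by
      rcases mul_eq_zero.mp this with h' | h'
      · exact h'
      · exact absurd h' (Complex.exp_ne_zero b)
    exact hab (h.trans hb0.symm)
  have hb0 : b ≠ 0 := by
    intro h
    have : a * Complex.exp a = 0 := by rw [hk1, h, zero_mul]
    have : a = 0 := by
      rcases mul_eq_zero.mp this with h' | h'
      · exact h'
      · exact absurd h' (Complex.exp_ne_zero a)
    exact hab (this.trans h.symm)
  have hc0 : c ≠ 0 := by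
    intro h
    have : b * Complex.exp b = 0 := by rw [hk2', h, zero_mul]
    have : b = 0 := by
      rcases mul_eq_zero.mp this with h' | h'
      · exact h'
      · exact absurd h' (Complex.exp_ne_zero b)
    exact hbc (this.trans h.symm)
  -- roots
  have hL2' : (L:ℂ)^2 = a*b + b*c + c*a := by rw [hcdef]; linear_combination hL2
  have hsumabc : a + b + c = 0 := by rw [hcdef]; ring
  set lam : ℂ := a*b*c/(L:ℂ)^3 with hlam
  set ν₁ : ℂ := -a/L with hν₁
  set ν₂ : ℂ := -b/L with hν₂
  set ν₃ : ℂ := -c/L with hν₃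
  have hr1 : ν₁^3 + ν₁ + lam = 0 := by
    have key : ν₁^3 + ν₁ + lam
        = (-(1:ℂ)/(L:ℂ)^3) * (a^3 + a*(L:ℂ)^2 + a*b*(a+b)) := by
      rw [hν₁, hlam, hcdef]
      field_simp
      ring
    rw [key, show (a^3 + a*(L:ℂ)^2 + a*b*(a+b)) = 0 by linear_combination a*hL2, mul_zero]
  have hr2 : ν₂^3 + ν₂ + lam = 0 := by
    have key : ν₂^3 + ν₂ + lam
        = (-(1:ℂ)/(L:ℂ)^3) * (b^3 + b*(L:ℂ)^2 + a*b*(a+b)) := by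
      rw [hν₂, hlam, hcdef]
      field_simp
      ring
    rw [key, show (b^3 + b*(L:ℂ)^2 + a*b*(a+b)) = 0 by linear_combination b*hL2, mul_zero]
  have hr3 : ν₃^3 + ν₃ + lam = 0 := by
    have key : ν₃^3 + ν₃ + lam
        = (-(1:ℂ)/(L:ℂ)^3) * ((-(a+b))^3 + (-(a+b))*(L:ℂ)^2 + a*b*(a+b)) := by
      rw [hν₃, hlam, hcdef]
      field_simp
      ring
    rw [key, show ((-(a+b))^3 + (-(a+b))*(L:ℂ)^2 + a*b*(a+b)) = 0
      by linear_combination (-(a+b))*hL2, mul_zero]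
  set v : ℝ → ℂ := sol3 (c-b) 0 ν₁ (a-c) 0 ν₂ (b-a) 0 ν₃ with hvdef
  have hODEv : KdVSpectralODE lam L v := by
    rw [hvdef]
    exact sol3_kdv lam L _ _ _ _ _ _ _ _ _
      (by rw [hr1]; ring) (by ring) (by ring)
      (by rw [hr2]; ring) (by ring) (by ring)
      (by rw [hr3]; ring) (by ring) (by ring)
  -- exp values
  have hEb : Complex.exp b = a * Complex.exp a / b := by
    field_simp
    linear_combination -hk1
  have hEc : Complex.exp c = a * Complex.exp a / c := by
    have : Complex.exp c = b * Complex.exp b / c := by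
      field_simp
      linear_combination -hk2'
    rw [this, hEb]
    field_simp
  have hfix1 : ν₁*(L:ℂ) = -a := by rw [hν₁]; field_simp
  have hfix2 : ν₂*(L:ℂ) = -b := by rw [hν₂]; field_simp
  have hfix3 : ν₃*(L:ℂ) = -c := by rw [hν₃]; field_simp
  -- boundary values of v
  have hv0 : v 0 = 0 := by rw [hvdef, sol3_zero]; ring
  have hv'0 : deriv v 0 = 0 := by
    rw [hvdef, sol3_deriv, sol3_zero, hν₁, hν₂, hν₃]
    field_simp
    ring
  have hvL : v L = 0 := by
    rw [hvdef, sol3_apply, hfix1, hfix2, hfix3, Complex.exp_neg, Complex.exp_neg,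
      Complex.exp_neg, hEb, hEc]
    field_simp [Complex.exp_ne_zero]
    ring
  have hv2L : deriv (deriv v) L = 0 := by
    rw [hvdef, sol3_deriv, sol3_deriv, sol3_apply, hfix1, hfix2, hfix3, Complex.exp_neg,
      Complex.exp_neg, Complex.exp_neg, hEb, hEc, hν₁, hν₂, hν₃]
    field_simp [Complex.exp_ne_zero]
    ring
  have hv''0 : deriv (deriv v) 0 = (a-b)*(b-c)*(c-a)/(L:ℂ)^2 := by
    rw [hvdef, sol3_deriv, sol3_deriv, sol3_zero, hν₁, hν₂, hν₃]
    field_simp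
    ring
  have hv''0ne : deriv (deriv v) 0 ≠ 0 := by
    rw [hv''0]
    apply div_ne_zero
    · exact mul_ne_zero (mul_ne_zero (sub_ne_zero.mpr hab) (sub_ne_zero.mpr hbc))
        (sub_ne_zero.mpr (Ne.symm hac))
    · exact pow_ne_zero 2 hLne
  -- indices
  set i0 : Fin N := ⟨0, Nat.lt_of_lt_of_le (Nat.succ_pos 2) hN⟩ with hi0
  set j1 : Fin N := ⟨1, by omega⟩ with hj1
  set j2 : Fin N := ⟨2, by omega⟩ with hj2
  have hj12 : j1 ≠ j2 := by simp [hj1, hj2, Fin.ext_iff]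
  have hj10 : j1 ≠ i0 := by simp [hj1, hi0, Fin.ext_iff]
  have hj20 : j2 ≠ i0 := by simp [hj2, hi0, Fin.ext_iff]
  set e : Fin N → ℂ := fun j => if j = j1 then 1 else if j = j2 then -1 else 0 with he
  refine ⟨lam, fun j => fun x => e j * v x, ?_, ?_, ?_, ?_, ?_, ?_, ?_, ?_⟩
  · exact fun j => kdv_smul (e j) hODEv
  · intro j
    show e j * v 0 = e i0 * v 0
    rw [hv0]; ring
  · have hsum : ∀ j : Fin N, iteratedDeriv 2 (fun x => e j * v x) 0
        = e j * deriv (deriv v) 0 := by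
      intro j
      rw [iteratedDeriv_two, deriv2_smul_fun (e j) hODEv.1]
    rw [Finset.sum_congr rfl (fun j _ => hsum j)]
    rw [← Finset.sum_mul]
    have : (∑ j, e j) = 0 := by
      have hsplit : ∀ j : Fin N, e j = (if j = j1 then (1:ℂ) else 0)
          + (if j = j2 then (-1:ℂ) else 0) := by
        intro j
        rw [he]
        by_cases h1 : j = j1
        · subst h1; simp [hj12]
        · by_cases h2 : j = j2 <;> simp [h1, h2, Ne.symm hj12]
      rw [Finset.sum_congr rfl (fun j _ => hsplit j), Finset.sum_add_distrib]
      simp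
    rw [this, zero_mul]
  · intro j
    show e j * v L = 0
    rw [hvL]; ring
  · intro j
    show deriv (fun x => e j * v x) 0 = 0
    rw [deriv_smul_fun (e j) (hODEv.1.differentiable (by norm_num))]
    show e j * deriv v 0 = 0
    rw [hv'0]; ring
  · show deriv (fun x => e i0 * v x) L = 0
    rw [deriv_smul_fun (e i0) (hODEv.1.differentiable (by norm_num))]
    show e i0 * deriv v L = 0
    have : e i0 = 0 := by rw [he]; simp [Ne.symm hj10, Ne.symm hj20]
    rw [this]; ring
  · intro j hj
    rw [iteratedDeriv_two, deriv2_smul_fun (e j) hODEv.1]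
    show e j * deriv (deriv v) L = 0
    rw [hv2L]; ring
  · refine ⟨j1, ?_⟩
    by_contra hcon
    push_neg at hcon
    have hEqOn : Set.EqOn v (fun _ => 0) (Set.Icc 0 L) := by
      intro x hx
      have := hcon x hx
      have hej1 : e j1 = 1 := by rw [he]; simp
      rw [hej1, one_mul] at this
      simpa using this
    have htr := eqOn_deriv2_Icc hL hODEv.1 contDiff_const hEqOn ⟨le_refl _, hL.le⟩
    have hz : deriv (deriv (fun _ : ℝ => (0:ℂ))) 0 = 0 := by
      simp [deriv_const']
    rw [hz] at htr
    exact hv''0ne htr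

end KdVAux

theorem stmt5 (N : ℕ) (hN : 3 ≤ N) (L : ℝ) (hL : 0 < L) :
    (∃ lam : ℂ, ∃ φ : Fin N → ℝ → ℂ,
      (∀ j, KdVSpectralODE lam L (φ j)) ∧
      (∀ j, φ j 0 = φ ⟨0, by omega⟩ 0) ∧
      (∑ j, iteratedDeriv 2 (φ j) 0) = 0 ∧
      (∀ j, φ j L = 0) ∧
      (∀ j, deriv (φ j) 0 = 0) ∧
      deriv (φ ⟨0, by omega⟩) L = 0 ∧
      (∀ j : Fin N, j ≠ ⟨0, by omega⟩ → iteratedDeriv 2 (φ j) L = 0) ∧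
      (∃ j, ∃ x ∈ Set.Icc (0 : ℝ) L, φ j x ≠ 0)) ↔
    L ∈ criticalNStar := by
  constructor
  · rintro ⟨lam, φ, hODE, h0eq, hsum2, hLval, hd0, hd1L, hd2L, hnt⟩
    have hbc : ∀ u v : ℝ → ℂ, KdVSpectralODE lam L u → KdVSpectralODE lam L v →
        u 0 = 1 → deriv u 0 = 0 → deriv (deriv u) 0 = 0 →
        v 0 = 0 → deriv v 0 = 0 → deriv (deriv v) 0 = 1 →
        (v L = 0 ∧ deriv (deriv v) L = 0) ∨ (v L = 0 ∧ u L = 0) :=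
      fun u v hu hv hu0 hu'0 hu''0 hv0 hv'0 hv''0 =>
        boundary_system hN hL φ hODE h0eq hsum2 hLval hd0 hd1L hd2L hnt
          hu hv hu0 hu'0 hu''0 hv0 hv'0 hv''0
    obtain ⟨ν₁, ν₂, he2', he3'⟩ := cubic_roots lam
    have hr1 : ν₁^3 + ν₁ + lam = 0 := by linear_combination (-ν₁)*he2' + he3'
    have hr2 : ν₂^3 + ν₂ + lam = 0 := by linear_combination (-ν₂)*he2' + he3'
    have hr3 : (-ν₁-ν₂)^3 + (-ν₁-ν₂) + lam = 0 := by
      linear_combination (ν₁+ν₂)*he2' + he3'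
    by_cases h12 : ν₁ = ν₂
    · have hb : 3*ν₁^2 + 1 = 0 := by
        linear_combination (-1 : ℂ)*he2' + (2*ν₁+ν₂)*h12
      exact (forward_degenerate ν₁ hb hr1 hbc).elim
    · by_cases h13 : ν₁ = -ν₁-ν₂
      · have hb : 3*ν₁^2 + 1 = 0 := by
          linear_combination (-1 : ℂ)*he2' + (ν₁-ν₂)*h13
        exact (forward_degenerate ν₁ hb hr1 hbc).elim
      · by_cases h23 : ν₂ = -ν₁-ν₂
        · have hb : 3*ν₂^2 + 1 = 0 := by
            linear_combination (-1 : ℂ)*he2' + (ν₂-ν₁)*h23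
          exact (forward_degenerate ν₂ hb hr2 hbc).elim
        · exact forward_distinct hL ν₁ ν₂ (-ν₁-ν₂) (by ring) he2' h12 h13 h23 hbc hr1 hr2 hr3
  · exact fun hmem => backward_dir hN hL hmem
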